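/- Let G be a finite group containing an element z of order 4. Then the cyclic subgroup ⟨z²⟩ generated by z² is not a perfect code of G. -/
import Mathlib


/-- A subgroup `H` of a group `G` is a *perfect code* of `G` if `H` admits an
inverse-closed left transversal in `G`, i.e. there is a set `T ⊆ G` with
`T⁻¹ = T` such that every element of `G` lies in exactly one left coset `tH`, `t ∈ T`. -/
def IsPerfectCode {G : Type*} [Group G] (H : Subgroup G) : Prop :=
  ∃ T : Set G, T⁻¹ = T ∧ ∀ g : G, ∃! t : G, t ∈ T ∧ t⁻¹ * g ∈ H

theorem not_perfectCode_zpowers_sq_of_order_four {G : Type*} [Group G] [Finite G]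
    (z : G) (hz : orderOf z = 4) :
    ¬ IsPerfectCode (Subgroup.zpowers (z ^ 2)) := by
  rintro ⟨T, hTinv, hT⟩
  have hz4 : z ^ (4 : ℕ) = 1 := hz ▸ pow_orderOf_eq_one z
  have hz2 : z ^ (2 : ℕ) ≠ 1 := by
    intro h
    have := orderOf_dvd_of_pow_eq_one h
    rw [hz] at this
    omega
  obtain ⟨t, ⟨htT, htK⟩, huniq⟩ := hT z
  obtain ⟨k, hk⟩ := htK
  have hk' : (z ^ 2) ^ k = t⁻¹ * z := hk
  have ht : t = z * ((z ^ 2) ^ k)⁻¹ := by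
    rw [hk']; group
  have htinvT : t⁻¹ ∈ T := by
    rw [← hTinv]; simpa [Set.mem_inv] using htT
  have hmem : t⁻¹⁻¹ * z ∈ Subgroup.zpowers (z ^ 2) :=
    ⟨1 - k, by rw [ht]; group⟩
  have heq : t⁻¹ = t := huniq t⁻¹ ⟨htinvT, hmem⟩
  have h1 : t * t = 1 := by
    nth_rewrite 2 [← heq]
    simp
  apply hz2
  have key : z ^ (2 : ℕ) = t * t * ((z ^ (4 : ℕ)) ^ k) := by
    rw [ht]; group
  rw [key, h1, hz4, one_zpow, one_mul]
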